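/- For any positive integer n and nonzero field elements x_1,...,x_n, the n×n determinant det(x_h^{t} - x_h^{-t})_{1≤h,t≤n} equals (x_1···x_n)^{-n} · ∏_{1≤h<t≤n}(x_h - x_t)(1 - x_h x_t) · ∏_{h=1}^n (x_h^2 - 1). -/

import Mathlib

open Polynomial Finset

/-- Chebyshev-like polynomials: `S k` evaluated at `x + x⁻¹` gives
`(x^(k+1) - x^(-(k+1)))/(x - x⁻¹)`. -/
noncomputable def Sc (F : Type*) [Field F] : ℕ → Polynomial F
  | 0 => 1
  | 1 => X
  | (k+2) => X * Sc F (k+1) - Sc F k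

theorem Sc_monic_deg (F : Type*) [Field F] :
    ∀ k, (Sc F k).Monic ∧ (Sc F k).degree = k := by
  have key : ∀ k, ((Sc F k).Monic ∧ (Sc F k).degree = k) ∧
      ((Sc F (k+1)).Monic ∧ (Sc F (k+1)).degree = (k+1)) := by
    intro k
    induction k with
    | zero => refine ⟨⟨monic_one, ?_⟩, ⟨monic_X, ?_⟩⟩ <;> simp [Sc]
    | succ k ih =>
      obtain ⟨⟨hm0, hd0⟩, ⟨hm1, hd1⟩⟩ := ih
      refine ⟨⟨hm1, hd1⟩, ?_, ?_⟩
      · show (X * Sc F (k+1) - Sc F k).Monic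
        apply Polynomial.Monic.sub_of_left (monic_X.mul hm1)
        rw [degree_mul, degree_X, hd0, hd1]
        exact_mod_cast by omega
      · show (X * Sc F (k+1) - Sc F k).degree = _
        rw [degree_sub_eq_left_of_degree_lt, degree_mul, degree_X, hd1]
        · exact_mod_cast by omega
        · rw [degree_mul, degree_X, hd0, hd1]
          exact_mod_cast by omega
  exact fun k => (key k).1

theorem Sc_eval {F : Type*} [Field F] (x : F) (hx : x ≠ 0) :
    ∀ k, (x - x⁻¹) * (Sc F k).eval (x + x⁻¹) = x^(k+1) - (x⁻¹)^(k+1) := by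
  have hx1 : x * x⁻¹ = 1 := mul_inv_cancel₀ hx
  have key : ∀ k, ((x - x⁻¹) * (Sc F k).eval (x + x⁻¹) = x^(k+1) - (x⁻¹)^(k+1)) ∧
      ((x - x⁻¹) * (Sc F (k+1)).eval (x + x⁻¹) = x^(k+2) - (x⁻¹)^(k+2)) := by
    intro k
    induction k with
    | zero => constructor <;> simp [Sc] <;> ring
    | succ k ih =>
      obtain ⟨ih0, ih1⟩ := ih
      refine ⟨ih1, ?_⟩
      show (x - x⁻¹) * (X * Sc F (k+1) - Sc F k).eval (x + x⁻¹) = _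
      simp only [eval_sub, eval_mul, eval_X]
      linear_combination (x + x⁻¹) * ih1 - ih0 + (x^(k+1) - (x⁻¹)^(k+1)) * hx1
  exact fun k => (key k).1

theorem prod_pairs_mul {F : Type*} [CommMonoid F] (n : ℕ) (y : Fin n → F) :
    (∏ h, y h) * ∏ t : Fin n, ∏ h ∈ Finset.Iio t, (y h * y t) = ∏ h, y h ^ n := by
  have swap : ∏ t : Fin n, ∏ h ∈ Finset.Iio t, y h
      = ∏ h : Fin n, ∏ t ∈ Finset.Ioi h, y h := by
    rw [Finset.prod_comm' (s := Finset.univ) (t := fun t => Finset.Iio t)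
      (t' := Finset.univ) (s' := fun h => Finset.Ioi h) (by simp)]
  calc (∏ h, y h) * ∏ t : Fin n, ∏ h ∈ Finset.Iio t, (y h * y t)
      = (∏ h, y h) * ((∏ t : Fin n, ∏ h ∈ Finset.Iio t, y h) *
          ∏ t : Fin n, ∏ h ∈ Finset.Iio t, y t) := by
        rw [← Finset.prod_mul_distrib]
        simp [Finset.prod_mul_distrib]
    _ = ∏ h : Fin n, y h * (y h ^ (n - 1 - (h : ℕ)) * y h ^ (h : ℕ)) := by
        rw [swap]
        simp only [Finset.prod_const, Fin.card_Ioi, Fin.card_Iio]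
        rw [← Finset.prod_mul_distrib, ← Finset.prod_mul_distrib]
    _ = ∏ h, y h ^ n := by
        refine Finset.prod_congr rfl fun h _ => ?_
        rw [← pow_add, ← pow_succ']
        congr 1
        omega

/-- Equation (sympl): symplectic Vandermonde-type determinant evaluation. -/
theorem stmt_3 {F : Type*} [Field F] (n : ℕ) (hn : 0 < n) (x : Fin n → F)
    (hx : ∀ h, x h ≠ 0) :
    Matrix.det (Matrix.of fun h t : Fin n =>
        x h ^ (((t : ℕ) + 1 : ℤ)) - x h ^ (-((t : ℕ) + 1 : ℤ))) =
      (∏ h, x h) ^ ((-(n : ℤ))) *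
        (∏ t : Fin n, ∏ h ∈ Finset.Iio t, ((x h - x t) * (1 - x h * x t))) *
        ∏ h, (x h ^ 2 - 1) := by
  set z : Fin n → F := fun h => x h + (x h)⁻¹ with hz
  set d : Fin n → F := fun h => x h - (x h)⁻¹ with hd
  -- entrywise factorization
  have hentry : (Matrix.of fun h t : Fin n =>
      x h ^ (((t : ℕ) + 1 : ℤ)) - x h ^ (-((t : ℕ) + 1 : ℤ)))
      = Matrix.diagonal d * Matrix.of (fun h t : Fin n => (Sc F (t : ℕ)).eval (z h)) := by
    ext h t
    rw [Matrix.diagonal_mul, Matrix.of_apply, Matrix.of_apply]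
    rw [zpow_neg, ← inv_zpow]
    norm_cast
    exact (Sc_eval (x h) (hx h) (t : ℕ)).symm
  rw [hentry, Matrix.det_mul, Matrix.det_diagonal,
    ← Matrix.det_eval_matrixOfPolynomials_eq_det_vandermonde z (fun t => Sc F (t : ℕ))
      (fun t => Polynomial.natDegree_eq_of_degree_eq_some (Sc_monic_deg F t).2)
      (fun t => (Sc_monic_deg F t).1),
    Matrix.det_vandermonde]
  have hswap : ∏ i : Fin n, ∏ j ∈ Finset.Ioi i, (z j - z i)
      = ∏ t : Fin n, ∏ h ∈ Finset.Iio t, (z t - z h) :=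
    Finset.prod_comm' (by simp)
  have hfactor : ∏ t : Fin n, ∏ h ∈ Finset.Iio t, (z t - z h)
      = (∏ t : Fin n, ∏ h ∈ Finset.Iio t, ((x h - x t) * (1 - x h * x t))) *
        ∏ t : Fin n, ∏ h ∈ Finset.Iio t, ((x h)⁻¹ * (x t)⁻¹) := by
    rw [← Finset.prod_mul_distrib]
    refine Finset.prod_congr rfl fun t _ => ?_
    rw [← Finset.prod_mul_distrib]
    refine Finset.prod_congr rfl fun h _ => ?_
    have h1 := hx h; have h2 := hx t
    simp only [hz]
    field_simp [hz]
    ring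
  have hd' : ∏ h, d h = (∏ h, (x h ^ 2 - 1)) * ∏ h, (x h)⁻¹ := by
    rw [← Finset.prod_mul_distrib]
    refine Finset.prod_congr rfl fun h _ => ?_
    have h1 := hx h
    simp only [hd]
    field_simp [hd]
  have hpow : (∏ h, x h) ^ (-(n : ℤ))
      = (∏ h, (x h)⁻¹) * ∏ t : Fin n, ∏ h ∈ Finset.Iio t, ((x h)⁻¹ * (x t)⁻¹) := by
    rw [prod_pairs_mul n (fun h => (x h)⁻¹), zpow_neg, zpow_natCast, ← Finset.prod_pow,
      ← Finset.prod_inv_distrib]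
    simp [inv_pow]
  rw [hswap, hfactor, hd', hpow]
  ring
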